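/- The numerical range (field of values) of any complex n×n matrix A, defined as { v^H A v : ‖v‖ = 1 }, is a convex subset of C (Toeplitz–Hausdorff theorem). -/

import Mathlib

open Matrix

private lemma quad_expand {n : ℕ} (M : Matrix (Fin n) (Fin n) ℂ) (x y : Fin n → ℂ) (a b : ℂ) :
    star (a • x + b • y) ⬝ᵥ M.mulVec (a • x + b • y) =
      (starRingEnd ℂ) a * a * (star x ⬝ᵥ M.mulVec x) +
      (starRingEnd ℂ) a * b * (star x ⬝ᵥ M.mulVec y) +
      (starRingEnd ℂ) b * a * (star y ⬝ᵥ M.mulVec x) +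
      (starRingEnd ℂ) b * b * (star y ⬝ᵥ M.mulVec y) := by
  simp only [star_add, star_smul, mulVec_add, mulVec_smul, add_dotProduct, dotProduct_add,
    smul_dotProduct, dotProduct_smul, smul_eq_mul, RCLike.star_def]
  ring

private lemma dp_expand {n : ℕ} (x y : Fin n → ℂ) (a b : ℂ) :
    star (a • x + b • y) ⬝ᵥ (a • x + b • y) =
      (starRingEnd ℂ) a * a * (star x ⬝ᵥ x) +
      (starRingEnd ℂ) a * b * (star x ⬝ᵥ y) +
      (starRingEnd ℂ) b * a * (star y ⬝ᵥ x) +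
      (starRingEnd ℂ) b * b * (star y ⬝ᵥ y) := by
  simpa only [one_mulVec] using quad_expand 1 x y a b

private lemma smul_quad {n : ℕ} (M : Matrix (Fin n) (Fin n) ℂ) (y : Fin n → ℂ) (a : ℂ) :
    star (a • y) ⬝ᵥ M.mulVec (a • y) = (starRingEnd ℂ) a * a * (star y ⬝ᵥ M.mulVec y) := by
  simp only [star_smul, mulVec_smul, smul_dotProduct, dotProduct_smul, smul_eq_mul,
    RCLike.star_def]
  ring

private lemma dp_conj_symm {n : ℕ} (x y : Fin n → ℂ) :
    star y ⬝ᵥ x = (starRingEnd ℂ) (star x ⬝ᵥ y) := by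
  simp only [dotProduct, map_sum]
  refine Finset.sum_congr rfl fun i _ => ?_
  simp only [Pi.star_apply, RCLike.star_def, _root_.map_mul, Complex.conj_conj]
  ring

private lemma dp_self_eq_zero {n : ℕ} {w : Fin n → ℂ} (h : star w ⬝ᵥ w = 0) : w = 0 := by
  have h1 : ∑ j, Complex.normSq (w j) = 0 := by
    have h2 := congrArg Complex.re h
    simpa only [dotProduct, Pi.star_apply, RCLike.star_def, Complex.re_sum,
      ← Complex.normSq_eq_conj_mul_self, Complex.ofReal_re, Complex.zero_re] using h2
  have h3 := (Finset.sum_eq_zero_iff_of_nonneg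
    (fun i _ => Complex.normSq_nonneg (w i))).mp h1
  funext i
  exact Complex.normSq_eq_zero.mp (h3 i (Finset.mem_univ i))

private lemma dp_self_re_nonneg {n : ℕ} (w : Fin n → ℂ) : 0 ≤ (star w ⬝ᵥ w).re := by
  simp only [dotProduct, Pi.star_apply, RCLike.star_def, Complex.re_sum]
  apply Finset.sum_nonneg
  intro i _
  rw [← Complex.normSq_eq_conj_mul_self, Complex.ofReal_re]
  exact Complex.normSq_nonneg _

/-- Toeplitz–Hausdorff theorem: the numerical range (field of values)
`W(A) = { vᴴ A v : ‖v‖ = 1 }` of any complex `n × n` matrix `A` is a convex subset of `ℂ`. -/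
theorem numericalRange_convex {n : ℕ} (A : Matrix (Fin n) (Fin n) ℂ) :
    Convex ℝ {z : ℂ | ∃ v : Fin n → ℂ, star v ⬝ᵥ v = 1 ∧ star v ⬝ᵥ A.mulVec v = z} := by
  intro z1 hz1 z2 hz2 a b ha hb hab
  obtain ⟨x, hx1, hxA⟩ := hz1
  obtain ⟨y, hy1, hyA⟩ := hz2
  by_cases hz : z1 = z2
  · refine ⟨x, hx1, ?_⟩
    rw [hxA, hz, ← add_smul, hab, one_smul]
  -- nondegenerate case
  have hne : z2 - z1 ≠ 0 := sub_ne_zero.mpr (Ne.symm hz)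
  set B : Matrix (Fin n) (Fin n) ℂ := (z2 - z1)⁻¹ • (A - z1 • (1 : Matrix (Fin n) (Fin n) ℂ))
    with hBdef
  have key : ∀ u w : Fin n → ℂ,
      star u ⬝ᵥ B.mulVec w = (z2 - z1)⁻¹ * (star u ⬝ᵥ A.mulVec w - z1 * (star u ⬝ᵥ w)) := by
    intro u w
    simp only [hBdef, smul_mulVec, sub_mulVec, one_mulVec, dotProduct_smul,
      dotProduct_sub, smul_eq_mul]
  have hBx : star x ⬝ᵥ B.mulVec x = 0 := by
    rw [key, hxA, hx1]; ring
  have hBy : star y ⬝ᵥ B.mulVec y = 1 := by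
    rw [key, hyA, hy1]; field_simp
  set qxy := star x ⬝ᵥ B.mulVec y with hqxy
  set qyx := star y ⬝ᵥ B.mulVec x with hqyx
  set pxy := star x ⬝ᵥ y with hpxy
  set d : ℂ := qxy - (starRingEnd ℂ) qyx with hd
  set c : ℂ := if d = 0 then 1 else (starRingEnd ℂ) d / (‖d‖ : ℂ) with hc
  have hc1 : (starRingEnd ℂ) c * c = 1 := by
    rw [← Complex.normSq_eq_conj_mul_self]
    by_cases h : d = 0
    · simp [hc, h]
    · have hd0 : ‖d‖ ≠ 0 := by
        simpa using norm_ne_zero_iff.mpr h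
      rw [hc, if_neg h, Complex.normSq_div, Complex.normSq_conj, Complex.normSq_ofReal,
        Complex.normSq_eq_norm_sq]
      rw [pow_two, div_self (mul_ne_zero hd0 hd0), Complex.ofReal_one]
  have hcd : (c * d).im = 0 := by
    by_cases h : d = 0
    · simp [h]
    · have hd0 : ‖d‖ ≠ 0 := norm_ne_zero_iff.mpr h
      rw [hc, if_neg h]
      rw [div_mul_eq_mul_div, mul_comm, Complex.mul_conj]
      rw [Complex.div_im]
      simp
  have hc0 : c ≠ 0 := by
    intro h; rw [h] at hc1; simp at hc1
  set m : ℂ := c * qxy + (starRingEnd ℂ) c * qyx with hm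
  have hmim : m.im = 0 := by
    have h1 : m = c * d + (c * (starRingEnd ℂ) qyx
        + (starRingEnd ℂ) (c * (starRingEnd ℂ) qyx)) := by
      simp only [hm, hd, _root_.map_mul, Complex.conj_conj]; ring
    rw [h1]
    simp only [Complex.add_im, Complex.mul_im, Complex.conj_re, Complex.conj_im]
    have := hcd
    simp only [Complex.mul_im] at this
    linarith
  set r : ℂ := c * pxy + (starRingEnd ℂ) c * (starRingEnd ℂ) pxy with hr
  have hrim : r.im = 0 := by
    have h1 : r = c * pxy + (starRingEnd ℂ) (c * pxy) := by
      rw [hr, _root_.map_mul]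
    rw [h1]
    simp only [Complex.add_im, Complex.conj_im]
    ring
  have hrre : (r.re : ℂ) = c * pxy + (starRingEnd ℂ) c * (starRingEnd ℂ) pxy := by
    rw [← hr]
    exact (Complex.ext (by simp) (by simp [hrim])).symm
  have hmre : (m.re : ℂ) = c * qxy + (starRingEnd ℂ) c * qyx := by
    rw [← hm]
    exact (Complex.ext (by simp) (by simp [hmim])).symm
  set P : ℝ → ℝ := fun t => (1 - t) ^ 2 + t ^ 2 + t * (1 - t) * r.re with hP
  set S : ℝ → ℝ := fun t => t * (1 - t) * m.re + t ^ 2 with hS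
  set v : ℝ → (Fin n → ℂ) := fun t => ((1 - t : ℝ) : ℂ) • x + (((t : ℝ) : ℂ) * c) • y with hv
  have hφ : ∀ t : ℝ, star (v t) ⬝ᵥ (v t) = (P t : ℂ) := by
    intro t
    simp only [hv, hP]
    rw [dp_expand x y ((1 - t : ℝ) : ℂ) (((t : ℝ) : ℂ) * c)]
    rw [hx1, hy1, ← hpxy, dp_conj_symm x y, ← hpxy]
    simp only [_root_.map_mul, Complex.conj_ofReal]
    push_cast
    linear_combination (-((t : ℂ) * (1 - (t : ℂ)))) * hrre + (t : ℂ) ^ 2 * hc1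
  have hψ : ∀ t : ℝ, star (v t) ⬝ᵥ B.mulVec (v t) = (S t : ℂ) := by
    intro t
    simp only [hv, hS]
    rw [quad_expand B x y ((1 - t : ℝ) : ℂ) (((t : ℝ) : ℂ) * c)]
    rw [hBx, hBy, ← hqxy, ← hqyx]
    simp only [_root_.map_mul, Complex.conj_ofReal]
    push_cast
    linear_combination (-((t : ℂ) * (1 - (t : ℂ)))) * hmre + (t : ℂ) ^ 2 * hc1
  have hPpos : ∀ t ∈ Set.Icc (0 : ℝ) 1, 0 < P t := by
    intro t ht
    have hnn : (0 : ℝ) ≤ P t := by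
      have h0 := dp_self_re_nonneg (v t)
      rw [hφ t, Complex.ofReal_re] at h0
      exact h0
    rcases hnn.lt_or_eq with h | h
    · exact h
    exfalso
    have hv0 : v t = 0 := by
      have h2 := hφ t
      rw [← h] at h2
      exact dp_self_eq_zero (by rw [hφ t, ← h, Complex.ofReal_zero])
    rcases eq_or_ne t 0 with ht0 | ht0
    · rw [ht0] at hv0
      simp only [hv] at hv0
      simp at hv0
      rw [hv0] at hx1
      simp at hx1
    rcases eq_or_ne t 1 with ht1 | ht1
    · rw [ht1] at hv0
      simp only [hv] at hv0
      simp at hv0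
      rcases hv0 with hc' | hy'
      · exact hc0 hc'
      · rw [hy'] at hy1; simp at hy1
    have h1t : ((1 - t : ℝ) : ℂ) ≠ 0 := by
      simp only [ne_eq, Complex.ofReal_eq_zero, sub_eq_zero]
      exact fun h' => ht1 h'.symm
    set lam : ℂ := ((1 - t : ℝ) : ℂ)⁻¹ * -(((t : ℝ) : ℂ) * c) with hlam
    have hxy : x = lam • y := by
      simp only [hv] at hv0
      have h2 : ((1 - t : ℝ) : ℂ) • x = -((((t : ℝ) : ℂ) * c) • y) :=
        add_eq_zero_iff_eq_neg.mp hv0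
      rw [hlam, ← smul_smul, neg_smul, ← h2, smul_smul, inv_mul_cancel₀ h1t, one_smul]
    have h4 : (0 : ℂ) = (starRingEnd ℂ) lam * lam := by
      rw [← hBx, hxy, smul_quad, hBy, mul_one]
    have h5 : lam = 0 := by
      rcases mul_eq_zero.mp h4.symm with h' | h'
      · simpa using h'
      · exact h'
    rw [hlam, mul_eq_zero] at h5
    rcases h5 with h5 | h5
    · exact h1t (inv_eq_zero.mp h5 ▸ rfl)
    · rw [neg_eq_zero, mul_eq_zero] at h5
      rcases h5 with h5 | h5
      · exact ht0 (by exact_mod_cast h5)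
      · exact hc0 h5
  -- intermediate value theorem
  have hPcont : Continuous P := by rw [hP]; fun_prop
  have hScont : Continuous S := by rw [hS]; fun_prop
  have hfcont : ContinuousOn (fun t => S t / P t) (Set.Icc (0 : ℝ) 1) :=
    hScont.continuousOn.div hPcont.continuousOn (fun t ht => (hPpos t ht).ne')
  have hf0 : S 0 / P 0 = 0 := by simp [hS, hP]
  have hf1 : S 1 / P 1 = 1 := by simp [hS, hP]
  have hivt := intermediate_value_Icc (by norm_num : (0:ℝ) ≤ 1) hfcont
  have hbmem : b ∈ Set.Icc (S 0 / P 0) (S 1 / P 1) := by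
    rw [hf0, hf1]
    exact ⟨hb, by linarith⟩
  obtain ⟨t, ht, hft⟩ := hivt hbmem
  have hPt := hPpos t ht
  set s : ℝ := (Real.sqrt (P t))⁻¹ with hs
  have hs2 : s ^ 2 * P t = 1 := by
    rw [hs, inv_pow, Real.sq_sqrt hPt.le]
    exact inv_mul_cancel₀ hPt.ne'
  have hnorm1 : star ((s : ℂ) • v t) ⬝ᵥ ((s : ℂ) • v t) = 1 := by
    have h2 : star ((s : ℂ) • v t) ⬝ᵥ ((s : ℂ) • v t)
        = (starRingEnd ℂ) (s : ℂ) * (s : ℂ) * (star (v t) ⬝ᵥ (v t)) := by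
      simp only [star_smul, smul_dotProduct, dotProduct_smul, smul_eq_mul, RCLike.star_def]
      ring
    rw [h2, hφ t, Complex.conj_ofReal]
    have hss : s * s * P t = 1 := by rw [← hs2]; ring
    exact_mod_cast congrArg Complex.ofReal hss
  refine ⟨(s : ℂ) • v t, hnorm1, ?_⟩
  have hBval : star ((s : ℂ) • v t) ⬝ᵥ B.mulVec ((s : ℂ) • v t) = (b : ℂ) := by
    rw [smul_quad, hψ t, Complex.conj_ofReal, ← hft]
    have hreal : s ^ 2 * S t = S t / P t := by
      rw [hs, inv_pow, Real.sq_sqrt hPt.le, div_eq_mul_inv, mul_comm]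
    push_cast [← hreal]
    ring
  rw [key, hnorm1, mul_one] at hBval
  have ha' : (a : ℂ) = 1 - (b : ℂ) := by
    have : a = 1 - b := by linarith
    exact_mod_cast this
  have hX : star ((s : ℂ) • v t) ⬝ᵥ A.mulVec ((s : ℂ) • v t) = z1 + (b : ℂ) * (z2 - z1) := by
    rw [inv_mul_eq_iff_eq_mul₀ hne] at hBval
    linear_combination hBval
  rw [hX, Complex.real_smul, Complex.real_smul, ha']
  ring
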